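/- For every integer ℓ ≥ 2 there exists a connected finite simple graph G on n = ℓ³ vertices such that, with k = ℓ², the maximum density of a k-vertex subgraph of G is at least (ℓ/3) = (n^{1/3}/3) times the maximum density over all connected k-vertex subgraphs of G. (Concretely, G is formed from ℓ vertex-disjoint ℓ-cliques L₁,…,L_ℓ by joining L_i to L_{i+1} with a path of length ℓ²+1 for each i; its densest k-subgraph is the disjoint union of the cliques, with density ℓ−1, whereas every connected k-subgraph has density at most 3(ℓ−1)/ℓ.) -/

import Mathlib

open Finset

variable {V : Type*}

noncomputable def graphDensity [Fintype V] (G : SimpleGraph V) : ℝ :=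
  2 * G.edgeSet.ncard / Fintype.card V

noncomputable def setDensity (G : SimpleGraph V) (A : Set V) : ℝ :=
  2 * (G.induce A).edgeSet.ncard / A.ncard

noncomputable def indDensity (G : SimpleGraph V) (S : Finset V) : ℝ :=
  2 * (G.induce (S : Set V)).edgeSet.ncard / S.card

noncomputable def subDensity {G : SimpleGraph V} (H : G.Subgraph) : ℝ :=
  2 * H.edgeSet.ncard / H.verts.ncard

noncomputable def maxKDensity (G : SimpleGraph V) (k : ℕ) : ℝ :=
  sSup {x : ℝ | ∃ H : G.Subgraph, H.verts.ncard = k ∧ x = subDensity H}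

noncomputable def maxConnKDensity (G : SimpleGraph V) (k : ℕ) : ℝ :=
  sSup {x : ℝ | ∃ H : G.Subgraph, H.verts.ncard = k ∧ H.Connected ∧ x = subDensity H}

noncomputable def maxDensity (G : SimpleGraph V) : ℝ :=
  sSup {x : ℝ | ∃ H : G.Subgraph, H.verts.Nonempty ∧ x = subDensity H}

def cutCount (G : SimpleGraph V) [DecidableRel G.Adj] (S T : Finset V) : ℕ :=
  ((S ×ˢ T).filter fun p => G.Adj p.1 p.2).card

def IsCompOf (G : SimpleGraph V) (A W : Set V) : Prop :=
  A.Nonempty ∧ A ⊆ W ∧ (G.induce A).Connected ∧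
    ∀ B : Set V, A ⊆ B → B ⊆ W → (G.induce B).Connected → B = A

noncomputable def subWDensity {G : SimpleGraph V} (w : Sym2 V → ℝ) (H : G.Subgraph) : ℝ :=
  2 * (∑ᶠ e ∈ H.edgeSet, w e) / H.verts.ncard

noncomputable def indWDensity (G : SimpleGraph V) (w : Sym2 V → ℝ) (S : Finset V) : ℝ :=
  2 * (∑ᶠ e ∈ {e : Sym2 V | e ∈ G.edgeSet ∧ ∀ v ∈ e, v ∈ S}, w e) / S.card

noncomputable def maxKWDensity (G : SimpleGraph V) (w : Sym2 V → ℝ) (k : ℕ) : ℝ :=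
  sSup {x : ℝ | ∃ H : G.Subgraph, H.verts.ncard = k ∧ x = subWDensity w H}

noncomputable def maxConnKWDensity (G : SimpleGraph V) (w : Sym2 V → ℝ) (k : ℕ) : ℝ :=
  sSup {x : ℝ | ∃ H : G.Subgraph, H.verts.ncard = k ∧ H.Connected ∧ x = subWDensity w H}



section Stmt14Aux
open SimpleGraph

private def bb (ℓ : ℕ) : ℕ := ℓ^2 + ℓ

private def Gr (ℓ : ℕ) : SimpleGraph (Fin (ℓ^3)) where
  Adj u v := u.val + 1 = v.val ∨ v.val + 1 = u.val ∨
    (u.val ≠ v.val ∧ u.val / bb ℓ = v.val / bb ℓ ∧ u.val % bb ℓ < ℓ ∧ v.val % bb ℓ < ℓ)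
  symm := by
    constructor
    intro u v h
    rcases h with h | h | ⟨h1, h2, h3, h4⟩
    · exact Or.inr (Or.inl h)
    · exact Or.inl h
    · exact Or.inr (Or.inr ⟨h1.symm, h2.symm, h4, h3⟩)
  loopless := by constructor; intro u h; rcases h with h | h | ⟨h1, _⟩ <;> omega

private lemma Gr_connected (ℓ : ℕ) (hℓ : 2 ≤ ℓ) : (Gr ℓ).Connected := by
  have hn : 0 < ℓ^3 := by positivity
  rw [SimpleGraph.connected_iff]
  have key : ∀ i (h : i < ℓ^3), (Gr ℓ).Reachable ⟨0, hn⟩ ⟨i, h⟩ := by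
    intro i
    induction i with
    | zero => intro h; exact SimpleGraph.Reachable.refl _
    | succ j ih =>
      intro h
      have hj : j < ℓ^3 := lt_trans (Nat.lt_succ_self j) h
      exact (ih hj).trans (SimpleGraph.Adj.reachable (Or.inl rfl))
  constructor
  · intro u v
    obtain ⟨u, hu⟩ := u
    obtain ⟨v, hv⟩ := v
    exact (key u hu).symm.trans (key v hv)
  · exact ⟨⟨0, hn⟩⟩

private lemma cross (ℓ : ℕ) (hℓ : 2 ≤ ℓ) {x y : Fin (ℓ^3)} (h : (Gr ℓ).Adj x y) {m : ℕ}
    (hm : ℓ - 1 ≤ m % bb ℓ) (h1 : x.val < m) (h2 : m < y.val) : False := by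
  rcases h with h | h | ⟨hne, hdiv, hx, hy⟩
  · omega
  · omega
  · have hb : ℓ ≤ bb ℓ := by unfold bb; nlinarith
    have hb0 : 0 < bb ℓ := by omega
    have hq1 : x.val / bb ℓ ≤ m / bb ℓ := Nat.div_le_div_right h1.le
    have hq2 : m / bb ℓ ≤ y.val / bb ℓ := Nat.div_le_div_right h2.le
    have hq : m / bb ℓ = x.val / bb ℓ := by omega
    have e1 : bb ℓ * (x.val / bb ℓ) + x.val % bb ℓ = x.val := Nat.div_add_mod _ _
    have e2 : bb ℓ * (y.val / bb ℓ) + y.val % bb ℓ = y.val := Nat.div_add_mod _ _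
    have e3 : bb ℓ * (m / bb ℓ) + m % bb ℓ = m := Nat.div_add_mod _ _
    rw [hq] at e3
    rw [← hdiv] at e2
    set P := bb ℓ * (x.val / bb ℓ) with hP
    omega

private lemma bb_mul (ℓ : ℕ) : bb ℓ * ℓ = ℓ^3 + ℓ^2 := by unfold bb; ring

private lemma bb_pos (ℓ : ℕ) (hℓ : 2 ≤ ℓ) : 0 < bb ℓ := by unfold bb; positivity

private lemma bb_eq (ℓ : ℕ) : bb ℓ = ℓ^2 + ℓ := rfl

-- block index of any vertex is < ℓ

private lemma blk_lt (ℓ : ℕ) (hℓ : 2 ≤ ℓ) (v : Fin (ℓ^3)) : v.val / bb ℓ < ℓ := by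
  rw [Nat.div_lt_iff_lt_mul (bb_pos ℓ hℓ)]
  have h1 := bb_mul ℓ
  have h2 := v.isLt
  have h3 : ℓ * bb ℓ = bb ℓ * ℓ := Nat.mul_comm _ _
  omega

private lemma walk_hit (ℓ : ℕ) (hℓ : 2 ≤ ℓ) (H : (Gr ℓ).Subgraph) {m : ℕ} (hmlt : m < ℓ^3)
    (hm : ℓ - 1 ≤ m % bb ℓ) :
    ∀ (u v : H.verts) (_ : H.coe.Walk u v), (u : Fin (ℓ^3)).val ≤ m → m ≤ (v : Fin (ℓ^3)).val →
      (⟨m, hmlt⟩ : Fin (ℓ^3)) ∈ H.verts := by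
  intro u v p
  induction p with
  | nil =>
    rename_i z
    intro h1 h2
    have : ((z : Fin (ℓ^3))) = ⟨m, hmlt⟩ := Fin.ext (le_antisymm h1 h2)
    rw [← this]; exact z.2
  | @cons a c w hadj q ih =>
    intro h1 h2
    by_cases he : (a : Fin (ℓ^3)).val = m
    · have : ((a : Fin (ℓ^3))) = ⟨m, hmlt⟩ := Fin.ext he
      rw [← this]; exact a.2
    · have hlt : (a : Fin (ℓ^3)).val < m := lt_of_le_of_ne h1 he
      have hG : (Gr ℓ).Adj a.1 c.1 := H.adj_sub ((SimpleGraph.Subgraph.coe_adj H a c) ▸ hadj)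
      have hcle : (c : Fin (ℓ^3)).val ≤ m := by
        by_contra hc
        push_neg at hc
        exact cross ℓ hℓ hG hm hlt hc
      exact ih hcle h2

private lemma one_clique_lt (ℓ : ℕ) (hℓ : 2 ≤ ℓ) (H : (Gr ℓ).Subgraph) (hconn : H.Connected)
    (hcard : H.verts.ncard = ℓ^2) {u v : Fin (ℓ^3)} (hu : u ∈ H.verts) (hv : v ∈ H.verts)
    (hu2 : u.val % bb ℓ < ℓ) (hv2 : v.val % bb ℓ < ℓ)
    (hlt : u.val / bb ℓ < v.val / bb ℓ) : False := by
  classical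
  have hbval := bb_eq ℓ
  set c1 := u.val / bb ℓ with hc1
  set c2 := v.val / bb ℓ with hc2
  have eu : bb ℓ * c1 + u.val % bb ℓ = u.val := Nat.div_add_mod _ _
  have ev : bb ℓ * c2 + v.val % bb ℓ = v.val := Nat.div_add_mod _ _
  have hc2lt : c2 < ℓ := blk_lt ℓ hℓ v
  have d1 : bb ℓ * c1 + bb ℓ ≤ bb ℓ * c2 := by
    have h := Nat.mul_le_mul_left (bb ℓ) (show c1 + 1 ≤ c2 by omega)
    calc bb ℓ * c1 + bb ℓ = bb ℓ * (c1 + 1) := by ring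
      _ ≤ bb ℓ * c2 := h
  have d2 : bb ℓ * c2 + bb ℓ ≤ ℓ^3 + ℓ^2 := by
    have h := Nat.mul_le_mul_left (bb ℓ) (show c2 + 1 ≤ ℓ by omega)
    calc bb ℓ * c2 + bb ℓ = bb ℓ * (c2 + 1) := by ring
      _ ≤ bb ℓ * ℓ := h
      _ = ℓ^3 + ℓ^2 := bb_mul ℓ
  have hmem : ∀ i < ℓ^2, ∃ w ∈ H.verts, (w : Fin (ℓ^3)).val = bb ℓ * c1 + ℓ + i := by
    intro i hi
    have hmlt : bb ℓ * c1 + ℓ + i < ℓ^3 := by omega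
    have hmr : (bb ℓ * c1 + ℓ + i) % bb ℓ = ℓ + i := by
      have h1 : ((ℓ + i) + bb ℓ * c1) % bb ℓ = (ℓ + i) % bb ℓ := Nat.add_mul_mod_self_left _ _ _
      have h2 : (ℓ + i) % bb ℓ = ℓ + i := Nat.mod_eq_of_lt (by omega)
      have h3 : bb ℓ * c1 + ℓ + i = (ℓ + i) + bb ℓ * c1 := by ring
      rw [h3, h1, h2]
    have hmm : ℓ - 1 ≤ (bb ℓ * c1 + ℓ + i) % bb ℓ := by omega
    have hum : u.val ≤ bb ℓ * c1 + ℓ + i := by omega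
    have hvm : bb ℓ * c1 + ℓ + i ≤ v.val := by omega
    obtain ⟨p⟩ := hconn.preconnected ⟨u, hu⟩ ⟨v, hv⟩
    exact ⟨⟨_, hmlt⟩, walk_hit ℓ hℓ H hmlt hmm ⟨u, hu⟩ ⟨v, hv⟩ p hum hvm, rfl⟩
  -- counting
  let Sv : Finset ℕ := H.verts.toFinset.image Fin.val
  have hSvcard : Sv.card = ℓ^2 := by
    rw [Finset.card_image_of_injective _ Fin.val_injective, ← Set.ncard_eq_toFinset_card', hcard]
  let T : Finset ℕ := (Finset.range (ℓ^2)).image (fun i => bb ℓ * c1 + ℓ + i)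
  have hTcard : T.card = ℓ^2 := by
    rw [Finset.card_image_of_injective _ (add_right_injective _), Finset.card_range]
  have hTsub : T ⊆ Sv := by
    intro x hx
    simp only [T, Finset.mem_image, Finset.mem_range] at hx
    obtain ⟨i, hi, rfl⟩ := hx
    obtain ⟨w, hw, hwv⟩ := hmem i hi
    simp only [Sv, Finset.mem_image]
    exact ⟨w, Set.mem_toFinset.mpr hw, hwv⟩
  have huT : u.val ∉ T := by
    simp only [T, Finset.mem_image, Finset.mem_range]
    rintro ⟨i, hi, hieq⟩
    omega
  have hvT : v.val ∉ T := by
    simp only [T, Finset.mem_image, Finset.mem_range]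
    rintro ⟨i, hi, hieq⟩
    omega
  have huv : u.val ≠ v.val := by omega
  have hins : insert u.val (insert v.val T) ⊆ Sv := by
    intro x hx
    simp only [Finset.mem_insert] at hx
    rcases hx with rfl | rfl | hx
    · simp only [Sv, Finset.mem_image]; exact ⟨u, Set.mem_toFinset.mpr hu, rfl⟩
    · simp only [Sv, Finset.mem_image]; exact ⟨v, Set.mem_toFinset.mpr hv, rfl⟩
    · exact hTsub hx
  have hcard2 : (insert u.val (insert v.val T)).card = ℓ^2 + 2 := by
    rw [Finset.card_insert_of_notMem (by simp only [Finset.mem_insert]; push_neg; exact ⟨huv, huT⟩),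
      Finset.card_insert_of_notMem hvT, hTcard]
  have := Finset.card_le_card hins
  omega

private def emin {N : ℕ} : Sym2 (Fin N) → Fin N := Sym2.lift ⟨min, min_comm⟩

private def emax {N : ℕ} : Sym2 (Fin N) → Fin N := Sym2.lift ⟨max, max_comm⟩

private lemma emin_mk {N : ℕ} (x y : Fin N) : emin s(x, y) = min x y := rfl

private lemma emax_mk {N : ℕ} (x y : Fin N) : emax s(x, y) = max x y := rfl

private lemma edge_rep (ℓ : ℕ) (H : (Gr ℓ).Subgraph) :
    ∀ e ∈ H.edgeSet,
      (∃ x y : Fin (ℓ^3), e = s(x, y) ∧ H.Adj x y ∧ x.val + 1 = y.val) ∨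
      (∃ x y : Fin (ℓ^3), e = s(x, y) ∧ H.Adj x y ∧ x.val % bb ℓ < ℓ ∧ y.val % bb ℓ < ℓ ∧
        x.val / bb ℓ = y.val / bb ℓ) := by
  intro e
  induction e using Sym2.ind with
  | _ x y =>
    intro he
    rw [SimpleGraph.Subgraph.mem_edgeSet] at he
    have hG : (Gr ℓ).Adj x y := H.adj_sub he
    rcases hG with h | h | ⟨h1, h2, h3, h4⟩
    · exact Or.inl ⟨x, y, rfl, he, h⟩
    · exact Or.inl ⟨y, x, Sym2.eq_swap, he.symm, h⟩
    · exact Or.inr ⟨x, y, rfl, he, h3, h4, h2⟩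

private lemma arith_key (t ℓ : ℕ) (h1 : 1 ≤ t) (h2 : t ≤ ℓ) : t*t + 3*ℓ ≤ ℓ*ℓ + 3*t := by
  obtain ⟨d, rfl⟩ : ∃ d, ℓ = t + d := ⟨ℓ - t, by omega⟩
  have h3 : (t + d) * (t + d) = t*t + 2*(t*d) + d*d := by ring
  have h4 : 1*d ≤ t*d := Nat.mul_le_mul_right d h1
  have h5 : 1*d ≤ d*d := by
    rcases Nat.eq_zero_or_pos d with rfl | hd
    · simp
    · exact Nat.mul_le_mul_right d hd
  omega

private lemma edge_bound (ℓ : ℕ) (hℓ : 2 ≤ ℓ) (H : (Gr ℓ).Subgraph) (hconn : H.Connected)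
    (hcard : H.verts.ncard = ℓ^2) : 2 * H.edgeSet.ncard ≤ 3 * (ℓ * ℓ) - 3 * ℓ := by
  classical
  have hpow : ℓ^2 = ℓ * ℓ := sq ℓ
  set Ss : Finset (Fin (ℓ^3)) := H.verts.toFinset with hSsdef
  have hSscard : Ss.card = ℓ^2 := by rw [hSsdef, ← Set.ncard_eq_toFinset_card', hcard]
  set Es : Finset (Sym2 (Fin (ℓ^3))) := H.edgeSet.toFinset with hEsdef
  have hEn : H.edgeSet.ncard = Es.card := by rw [hEsdef, Set.ncard_eq_toFinset_card']
  have hEsmem : ∀ e ∈ Es, e ∈ H.edgeSet := fun e he => Set.mem_toFinset.mp he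
  have hnd : ∀ e ∈ Es, ¬ e.IsDiag := fun e he =>
    SimpleGraph.not_isDiag_of_mem_edgeSet (Gr ℓ) (H.edgeSet_subset (hEsmem e he))
  rw [hEn]
  by_cases hex : ∃ u ∈ H.verts, u.val % bb ℓ < ℓ
  · obtain ⟨u₀, hu₀, hu₀2⟩ := hex
    set c := u₀.val / bb ℓ with hcdef
    have honly : ∀ w ∈ H.verts, w.val % bb ℓ < ℓ → w.val / bb ℓ = c := by
      intro w hw hw2
      rcases lt_trichotomy (w.val / bb ℓ) c with h | h | h
      · exact absurd h (fun h => one_clique_lt ℓ hℓ H hconn hcard hw hu₀ hw2 hu₀2 h)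
      · exact h
      · exact absurd h (fun h => one_clique_lt ℓ hℓ H hconn hcard hu₀ hw hu₀2 hw2 h)
    set D : Finset (Fin (ℓ^3)) := Ss.filter (fun w => w.val % bb ℓ < ℓ) with hDdef
    have hDsub : D ⊆ Ss := Finset.filter_subset _ _
    have hDmem : ∀ w, w ∈ D ↔ (w ∈ H.verts ∧ w.val % bb ℓ < ℓ) := by
      intro w
      rw [hDdef, Finset.mem_filter, hSsdef, Set.mem_toFinset]
    set t := D.card with htdef
    have ht1 : 1 ≤ t := Finset.card_pos.mpr ⟨u₀, (hDmem u₀).mpr ⟨hu₀, hu₀2⟩⟩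
    have htℓ : t ≤ ℓ := by
      have himg : D.image Fin.val ⊆ (Finset.range ℓ).image (fun p => bb ℓ * c + p) := by
        intro x hx
        obtain ⟨w, hw, rfl⟩ := Finset.mem_image.mp hx
        obtain ⟨hw1, hw2⟩ := (hDmem w).mp hw
        have hdiv : w.val / bb ℓ = c := honly w hw1 hw2
        have ew : bb ℓ * (w.val / bb ℓ) + w.val % bb ℓ = w.val := Nat.div_add_mod _ _
        rw [hdiv] at ew
        exact Finset.mem_image.mpr ⟨w.val % bb ℓ, Finset.mem_range.mpr hw2, ew⟩
      calc t = (D.image Fin.val).card := (Finset.card_image_of_injective _ Fin.val_injective).symm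
        _ ≤ ((Finset.range ℓ).image (fun p => bb ℓ * c + p)).card := Finset.card_le_card himg
        _ ≤ (Finset.range ℓ).card := Finset.card_image_le
        _ = ℓ := Finset.card_range ℓ
    have htk : t ≤ ℓ^2 := hSscard ▸ Finset.card_le_card hDsub
    set EsC := Es.filter (fun e => ∀ x ∈ e, x ∈ D) with hEsCdef
    set EsP := Es \ EsC with hEsPdef
    have hEsPmem : ∀ e, e ∈ EsP ↔ e ∈ Es ∧ ¬ ∀ x ∈ e, x ∈ D := by
      intro e
      rw [hEsPdef, Finset.mem_sdiff, hEsCdef, Finset.mem_filter]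
      tauto
    have hsplit : EsC.card + EsP.card = Es.card := by
      rw [hEsPdef]
      have hsub : EsC ⊆ Es := by rw [hEsCdef]; exact Finset.filter_subset _ _
      rw [Nat.add_comm, Finset.card_sdiff_add_card_eq_card hsub]
    -- clique part bound
    have hCbound : 2 * EsC.card + 2 * t ≤ t * t + t := by
      have hsub : EsC ∪ D.image (fun x => s(x, x)) ⊆ D.sym2 := by
        intro e he
        rcases Finset.mem_union.mp he with he | he
        · exact Finset.mem_sym2_iff.mpr ((Finset.mem_filter.mp he).2)
        · obtain ⟨x, hx, rfl⟩ := Finset.mem_image.mp he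
          exact Finset.mem_sym2_iff.mpr (fun a ha => by
            rcases Sym2.mem_iff.mp ha with rfl | rfl <;> exact hx)
      have hdisj : Disjoint EsC (D.image (fun x => s(x, x))) := by
        rw [Finset.disjoint_left]
        intro e he1 he2
        have he1' : e ∈ Es := Finset.mem_of_mem_filter e he1
        obtain ⟨x, _, rfl⟩ := Finset.mem_image.mp he2
        exact hnd _ he1' (Sym2.mk_isDiag_iff.mpr rfl)
      have hcd : (D.image (fun x => s(x, x))).card = t := by
        rw [Finset.card_image_of_injective]
        intro a b hab
        rcases Sym2.eq_iff.mp hab with ⟨h, _⟩ | ⟨h, _⟩ <;> exact h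
      have h1 : EsC.card + t ≤ D.sym2.card := by
        rw [← hcd, ← Finset.card_union_of_disjoint hdisj]
        exact Finset.card_le_card hsub
      have h2 : D.sym2.card = (t + 1).choose 2 := by rw [Finset.card_sym2]
      have h3 : (t + 1).choose 2 = (t + 1) * t / 2 := by
        rw [Nat.choose_two_right]; simp
      have h4 : (t + 1) * t = t * t + t := by ring
      omega
    -- path part bound
    have hPbound : EsP.card ≤ ℓ^2 - t := by
      -- the injection
      have hinto : ∀ e ∈ EsP,
          (if (emax e).val < bb ℓ * c + ℓ then emin e else emax e) ∈ Ss \ D := by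
        intro e he
        obtain ⟨heE, hnall⟩ := (hEsPmem _).mp he
        rcases edge_rep ℓ H e (hEsmem e heE) with ⟨x, y, rfl, hadj, hxy⟩ |
          ⟨x, y, rfl, hadj, h3, h4, h2⟩
        · have hx : x ∈ H.verts := H.edge_vert hadj
          have hy : y ∈ H.verts := H.edge_vert hadj.symm
          have hxley : x ≤ y := by rw [Fin.le_def]; omega
          rw [emax_mk, emin_mk, min_eq_left hxley, max_eq_right hxley]
          by_cases hcase : y.val < bb ℓ * c + ℓ
          · rw [if_pos hcase, Finset.mem_sdiff]
            refine ⟨Set.mem_toFinset.mpr hx, fun hxD => ?_⟩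
            obtain ⟨_, hx2⟩ := (hDmem x).mp hxD
            have hdiv : x.val / bb ℓ = c := honly x hx hx2
            have ex : bb ℓ * (x.val / bb ℓ) + x.val % bb ℓ = x.val := Nat.div_add_mod _ _
            rw [hdiv] at ex
            by_cases hlast : x.val % bb ℓ + 1 < ℓ
            · -- y is also a clique vertex in block c, so all of e in D, contra
              apply hnall
              intro a ha
              rcases Sym2.mem_iff.mp ha with rfl | rfl
              · exact hxD
              · refine (hDmem a).mpr ⟨hy, ?_⟩
                have hyval : a.val = bb ℓ * c + (x.val % bb ℓ + 1) := by omega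
                have hb := bb_eq ℓ
                have hsq : 2 * ℓ ≤ ℓ * ℓ := Nat.mul_le_mul_right ℓ hℓ
                have hpow2 : ℓ^2 = ℓ * ℓ := sq ℓ
                have hmod : a.val % bb ℓ = x.val % bb ℓ + 1 := by
                  rw [hyval, Nat.mul_add_mod]
                  exact Nat.mod_eq_of_lt (by omega)
                omega
            · omega
          · rw [if_neg hcase, Finset.mem_sdiff]
            refine ⟨Set.mem_toFinset.mpr hy, fun hyD => ?_⟩
            obtain ⟨_, hy2⟩ := (hDmem y).mp hyD
            have hdiv : y.val / bb ℓ = c := honly y hy hy2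
            have ey : bb ℓ * (y.val / bb ℓ) + y.val % bb ℓ = y.val := Nat.div_add_mod _ _
            rw [hdiv] at ey
            omega
        · -- clique edge: both ends in D, contradiction
          exfalso
          apply hnall
          intro a ha
          have hx : x ∈ H.verts := H.edge_vert hadj
          have hy : y ∈ H.verts := H.edge_vert hadj.symm
          rcases Sym2.mem_iff.mp ha with rfl | rfl
          · exact (hDmem a).mpr ⟨hx, h3⟩
          · exact (hDmem a).mpr ⟨hy, h4⟩
      have hinj : Set.InjOn (fun e => if (emax e).val < bb ℓ * c + ℓ then emin e else emax e)
          (EsP : Set (Sym2 (Fin (ℓ^3)))) := by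
        intro e1 he1 e2 he2 hfeq
        simp only [Finset.mem_coe] at he1 he2
        obtain ⟨he1E, hnall1⟩ := (hEsPmem _).mp he1
        obtain ⟨he2E, hnall2⟩ := (hEsPmem _).mp he2
        have rep1 := edge_rep ℓ H e1 (hEsmem e1 he1E)
        have rep2 := edge_rep ℓ H e2 (hEsmem e2 he2E)
        -- both must be consecutive
        have hcons : ∀ e, e ∈ Es → ¬ (∀ x ∈ e, x ∈ D) →
            ∃ x y : Fin (ℓ^3), e = s(x, y) ∧ x.val + 1 = y.val ∧
              x ∈ H.verts ∧ y ∈ H.verts := by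
          intro e heE hnall
          rcases edge_rep ℓ H e (hEsmem e heE) with ⟨x, y, rfl, hadj, hxy⟩ |
            ⟨x, y, rfl, hadj, h3, h4, h2⟩
          · exact ⟨x, y, rfl, hxy, H.edge_vert hadj, H.edge_vert hadj.symm⟩
          · exfalso
            apply hnall
            intro a ha
            rcases Sym2.mem_iff.mp ha with rfl | rfl
            · exact (hDmem a).mpr ⟨H.edge_vert hadj, h3⟩
            · exact (hDmem a).mpr ⟨H.edge_vert hadj.symm, h4⟩
        obtain ⟨x1, y1, rfl, hxy1, hx1, hy1⟩ := hcons e1 he1E hnall1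
        obtain ⟨x2, y2, rfl, hxy2, hx2, hy2⟩ := hcons e2 he2E hnall2
        have hle1 : x1 ≤ y1 := by rw [Fin.le_def]; omega
        have hle2 : x2 ≤ y2 := by rw [Fin.le_def]; omega
        simp only [emax_mk, emin_mk, min_eq_left hle1, max_eq_right hle1,
          min_eq_left hle2, max_eq_right hle2] at hfeq
        by_cases hc1 : y1.val < bb ℓ * c + ℓ <;> by_cases hc2 : y2.val < bb ℓ * c + ℓ
        · rw [if_pos hc1, if_pos hc2] at hfeq
          have : x1 = x2 := hfeq
          have : y1 = y2 := Fin.ext (by omega)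
          subst ‹x1 = x2›; subst this; rfl
        · rw [if_pos hc1, if_neg hc2] at hfeq
          have : x1.val = y2.val := congrArg Fin.val hfeq
          omega
        · rw [if_neg hc1, if_pos hc2] at hfeq
          have : y1.val = x2.val := congrArg Fin.val hfeq
          omega
        · rw [if_neg hc1, if_neg hc2] at hfeq
          have hy12 : y1 = y2 := hfeq
          have : x1 = x2 := Fin.ext (by have := congrArg Fin.val hy12; omega)
          subst this; subst hy12; rfl
      have := Finset.card_le_card_of_injOn _ hinto hinj
      rwa [Finset.card_sdiff_of_subset hDsub, hSscard] at this
    have key := arith_key t ℓ ht1 htℓ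
    omega
  · -- no clique vertices at all
    push_neg at hex
    have hSne : Ss.Nonempty := by
      rw [← Finset.card_pos, hSscard]; positivity
    set M := Ss.max' hSne with hM
    have hinto : ∀ e ∈ Es, emin e ∈ Ss.erase M := by
      intro e he
      rcases edge_rep ℓ H e (hEsmem e he) with ⟨x, y, rfl, hadj, hxy⟩ |
        ⟨x, y, rfl, hadj, h3, h4, h2⟩
      · have hx : x ∈ H.verts := H.edge_vert hadj
        have hy : y ∈ H.verts := H.edge_vert hadj.symm
        have hxley : x ≤ y := by rw [Fin.le_def]; omega
        rw [emin_mk, min_eq_left hxley]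
        refine Finset.mem_erase.mpr ⟨?_, Set.mem_toFinset.mpr hx⟩
        intro hxM
        have hyM : y ≤ M := Finset.le_max' _ _ (Set.mem_toFinset.mpr hy)
        rw [← hxM, Fin.le_def] at hyM
        omega
      · exact absurd h3 (Nat.not_lt.mpr (hex x (H.edge_vert hadj)))
    have hinj : Set.InjOn emin (Es : Set (Sym2 (Fin (ℓ^3)))) := by
      intro e1 he1 e2 he2 hfeq
      simp only [Finset.mem_coe] at he1 he2
      have hcons : ∀ e, e ∈ Es → ∃ x y : Fin (ℓ^3), e = s(x, y) ∧ x.val + 1 = y.val := by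
        intro e heE
        rcases edge_rep ℓ H e (hEsmem e heE) with ⟨x, y, rfl, hadj, hxy⟩ |
          ⟨x, y, rfl, hadj, h3, h4, h2⟩
        · exact ⟨x, y, rfl, hxy⟩
        · exact absurd h3 (Nat.not_lt.mpr (hex x (H.edge_vert hadj)))
      obtain ⟨x1, y1, rfl, hxy1⟩ := hcons e1 he1
      obtain ⟨x2, y2, rfl, hxy2⟩ := hcons e2 he2
      have hle1 : x1 ≤ y1 := by rw [Fin.le_def]; omega
      have hle2 : x2 ≤ y2 := by rw [Fin.le_def]; omega
      simp only [emin_mk, min_eq_left hle1, min_eq_left hle2] at hfeq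
      have : y1 = y2 := Fin.ext (by have := congrArg Fin.val hfeq; omega)
      subst hfeq; subst this; rfl
    have hEcard : Es.card ≤ ℓ^2 - 1 := by
      have := Finset.card_le_card_of_injOn _ hinto hinj
      rwa [Finset.card_erase_of_mem (Finset.max'_mem _ _), hSscard] at this
    have h1 : 2 ≤ ℓ := hℓ
    have key := arith_key 1 ℓ (le_refl 1) (by omega)
    omega

private def Gstar (ℓ : ℕ) : SimpleGraph (Fin (ℓ^3)) where
  Adj u v := u ≠ v ∧ u.val / bb ℓ = v.val / bb ℓ ∧ u.val % bb ℓ < ℓ ∧ v.val % bb ℓ < ℓ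
  symm := by constructor; rintro u v ⟨h1, h2, h3, h4⟩; exact ⟨h1.symm, h2.symm, h4, h3⟩
  loopless := by constructor; rintro u ⟨h1, _⟩; exact h1 rfl

private def Hstar (ℓ : ℕ) : (Gr ℓ).Subgraph where
  verts := {v | v.val % bb ℓ < ℓ}
  Adj u v := (Gstar ℓ).Adj u v
  adj_sub := by
    rintro u v ⟨h1, h2, h3, h4⟩
    exact Or.inr (Or.inr ⟨fun h => h1 (Fin.ext h), h2, h3, h4⟩)
  edge_vert := by rintro u v ⟨h1, h2, h3, h4⟩; exact h3
  symm := (Gstar ℓ).symm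

private lemma clique_filter_card (ℓ : ℕ) (hℓ : 2 ≤ ℓ) :
    ((univ : Finset (Fin (ℓ^3))).filter (fun v => v.val % bb ℓ < ℓ)).card = ℓ^2 := by
  have hℓ0 : 0 < ℓ := by omega
  have h : ((univ : Finset (Fin (ℓ^3))).filter (fun v => v.val % bb ℓ < ℓ)).card
      = (univ : Finset (Fin ℓ × Fin ℓ)).card := by
    apply Finset.card_nbij (fun v => (⟨v.val / bb ℓ, blk_lt ℓ hℓ v⟩, ⟨v.val % bb ℓ % ℓ, Nat.mod_lt _ hℓ0⟩))
    · intro a _; exact Finset.mem_univ _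
    · intro v1 hv1 v2 hv2 heq
      simp only [Finset.coe_filter, Set.mem_setOf_eq] at hv1 hv2
      have e1 : bb ℓ * (v1.val / bb ℓ) + v1.val % bb ℓ = v1.val := Nat.div_add_mod _ _
      have e2 : bb ℓ * (v2.val / bb ℓ) + v2.val % bb ℓ = v2.val := Nat.div_add_mod _ _
      have m1 : v1.val % bb ℓ % ℓ = v1.val % bb ℓ := Nat.mod_eq_of_lt hv1.2
      have m2 : v2.val % bb ℓ % ℓ = v2.val % bb ℓ := Nat.mod_eq_of_lt hv2.2
      simp only [Prod.mk.injEq, Fin.mk.injEq] at heq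
      obtain ⟨hd, hm⟩ := heq
      rw [hd] at e1
      apply Fin.ext
      generalize hP : bb ℓ * (v2.val / bb ℓ) = P at e1 e2
      omega
    · intro p _
      obtain ⟨⟨cv, hcv⟩, ⟨rv, hrv⟩⟩ := p
      have hlt : bb ℓ * cv + rv < ℓ^3 := by
        have h1 : bb ℓ * cv + bb ℓ ≤ bb ℓ * ℓ := by
          have := Nat.mul_le_mul_left (bb ℓ) (show cv + 1 ≤ ℓ by omega)
          calc bb ℓ * cv + bb ℓ = bb ℓ * (cv + 1) := by ring
            _ ≤ bb ℓ * ℓ := this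
        have h2 := bb_mul ℓ
        have h3 := bb_eq ℓ
        omega
      refine ⟨⟨bb ℓ * cv + rv, hlt⟩, ?_, ?_⟩
      · have hmod : (bb ℓ * cv + rv) % bb ℓ = rv :=
          (Nat.mul_add_mod _ _ _).trans (Nat.mod_eq_of_lt (by have := bb_eq ℓ; omega))
        simp only [Finset.coe_filter, Set.mem_setOf_eq]
        exact ⟨Finset.mem_univ _, by simp only [hmod]; omega⟩
      · have hmod : (bb ℓ * cv + rv) % bb ℓ = rv :=
          (Nat.mul_add_mod _ _ _).trans (Nat.mod_eq_of_lt (by have := bb_eq ℓ; omega))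
        have hdiv : (bb ℓ * cv + rv) / bb ℓ = cv := by
          rw [Nat.mul_add_div (bb_pos ℓ hℓ), Nat.div_eq_of_lt (by have := bb_eq ℓ; omega)]
          omega
        refine Prod.ext (Fin.ext ?_) (Fin.ext ?_)
        · exact hdiv
        · simp only [hmod]; exact Nat.mod_eq_of_lt hrv
  rw [h]
  simp [Fintype.card_prod, sq]

private lemma block_filter_card (ℓ : ℕ) (hℓ : 2 ≤ ℓ) (c : ℕ) (hc : c < ℓ) :
    ((univ : Finset (Fin (ℓ^3))).filter
      (fun u => u.val / bb ℓ = c ∧ u.val % bb ℓ < ℓ)).card = ℓ := by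
  have hℓ0 : 0 < ℓ := by omega
  have h : ((univ : Finset (Fin (ℓ^3))).filter
      (fun u => u.val / bb ℓ = c ∧ u.val % bb ℓ < ℓ)).card = (univ : Finset (Fin ℓ)).card := by
    apply Finset.card_nbij (fun v => (⟨v.val % bb ℓ % ℓ, Nat.mod_lt _ hℓ0⟩ : Fin ℓ))
    · intro a _; exact Finset.mem_univ _
    · intro v1 hv1 v2 hv2 heq
      simp only [Finset.coe_filter, Set.mem_setOf_eq] at hv1 hv2
      have e1 : bb ℓ * (v1.val / bb ℓ) + v1.val % bb ℓ = v1.val := Nat.div_add_mod _ _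
      have e2 : bb ℓ * (v2.val / bb ℓ) + v2.val % bb ℓ = v2.val := Nat.div_add_mod _ _
      have m1 : v1.val % bb ℓ % ℓ = v1.val % bb ℓ := Nat.mod_eq_of_lt hv1.2.2
      have m2 : v2.val % bb ℓ % ℓ = v2.val % bb ℓ := Nat.mod_eq_of_lt hv2.2.2
      simp only [Fin.mk.injEq] at heq
      have hd1 : v1.val / bb ℓ = c := hv1.2.1
      have hd2 : v2.val / bb ℓ = c := hv2.2.1
      rw [hd1] at e1
      rw [hd2] at e2
      apply Fin.ext
      generalize hP : bb ℓ * c = P at e1 e2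
      omega
    · intro p _
      obtain ⟨rv, hrv⟩ := p
      have hlt : bb ℓ * c + rv < ℓ^3 := by
        have h1 : bb ℓ * c + bb ℓ ≤ bb ℓ * ℓ := by
          have := Nat.mul_le_mul_left (bb ℓ) (show c + 1 ≤ ℓ by omega)
          calc bb ℓ * c + bb ℓ = bb ℓ * (c + 1) := by ring
            _ ≤ bb ℓ * ℓ := this
        have h2 := bb_mul ℓ
        have h3 := bb_eq ℓ
        omega
      have hmod : (bb ℓ * c + rv) % bb ℓ = rv :=
        (Nat.mul_add_mod _ _ _).trans (Nat.mod_eq_of_lt (by have := bb_eq ℓ; omega))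
      have hdiv : (bb ℓ * c + rv) / bb ℓ = c := by
        rw [Nat.mul_add_div (bb_pos ℓ hℓ), Nat.div_eq_of_lt (by have := bb_eq ℓ; omega)]
        omega
      refine ⟨⟨bb ℓ * c + rv, hlt⟩, ?_, ?_⟩
      · simp only [Finset.coe_filter, Set.mem_setOf_eq]
        refine ⟨Finset.mem_univ _, hdiv, by simp only [hmod]; omega⟩
      · exact Fin.ext (by simp only [hmod]; exact Nat.mod_eq_of_lt hrv)
  rw [h]
  simp

private lemma Hstar_verts (ℓ : ℕ) (hℓ : 2 ≤ ℓ) : (Hstar ℓ).verts.ncard = ℓ^2 := by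
  classical
  rw [Set.ncard_eq_toFinset_card']
  rw [show (Hstar ℓ).verts.toFinset
      = (univ : Finset (Fin (ℓ^3))).filter (fun v => v.val % bb ℓ < ℓ) by
    ext v
    simp [Hstar, Set.mem_toFinset]
    exact (Set.mem_toFinset (s := (Hstar ℓ).verts)).trans Iff.rfl]
  exact clique_filter_card ℓ hℓ

private lemma Hstar_edges (ℓ : ℕ) (hℓ : 2 ≤ ℓ) :
    2 * (Hstar ℓ).edgeSet.ncard = ℓ^2 * (ℓ - 1) := by
  classical
  have hset : (Hstar ℓ).edgeSet = (Gstar ℓ).edgeSet := by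
    ext e
    induction e using Sym2.ind with
    | _ x y =>
      rw [SimpleGraph.Subgraph.mem_edgeSet, SimpleGraph.mem_edgeSet]
      exact Iff.rfl
  rw [hset]
  have hfin : (Gstar ℓ).edgeSet.toFinset = (Gstar ℓ).edgeFinset := by
    ext e; simp [SimpleGraph.mem_edgeFinset, Set.mem_toFinset]
  rw [Set.ncard_eq_toFinset_card', hfin]
  have hdeg : ∀ v : Fin (ℓ^3), (Gstar ℓ).degree v = if v.val % bb ℓ < ℓ then ℓ - 1 else 0 := by
    intro v
    by_cases hv : v.val % bb ℓ < ℓ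
    · rw [if_pos hv]
      have hnb : (Gstar ℓ).neighborFinset v
          = ((univ : Finset (Fin (ℓ^3))).filter
              (fun u => u.val / bb ℓ = v.val / bb ℓ ∧ u.val % bb ℓ < ℓ)).erase v := by
        ext u
        rw [SimpleGraph.mem_neighborFinset, Finset.mem_erase, Finset.mem_filter]
        constructor
        · rintro ⟨h1, h2, h3, h4⟩
          exact ⟨fun h => h1 h.symm, Finset.mem_univ _, h2.symm, h4⟩
        · rintro ⟨h1, _, h2, h3⟩
          exact ⟨fun h => h1 h.symm, h2.symm, hv, h3⟩
      rw [SimpleGraph.degree, hnb, Finset.card_erase_of_mem, block_filter_card ℓ hℓ _ (blk_lt ℓ hℓ v)]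
      exact Finset.mem_filter.mpr ⟨Finset.mem_univ _, rfl, hv⟩
    · rw [if_neg hv]
      rw [SimpleGraph.degree, Finset.card_eq_zero, Finset.eq_empty_iff_forall_notMem]
      intro u hu
      rw [SimpleGraph.mem_neighborFinset] at hu
      exact hv hu.2.2.1
  have hsum := SimpleGraph.sum_degrees_eq_twice_card_edges (Gstar ℓ)
  have hsum2 : ∑ v : Fin (ℓ^3), (Gstar ℓ).degree v = ℓ^2 * (ℓ - 1) := by
    calc ∑ v : Fin (ℓ^3), (Gstar ℓ).degree v
        = ∑ v : Fin (ℓ^3), (if v.val % bb ℓ < ℓ then ℓ - 1 else 0) :=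
          Finset.sum_congr rfl (fun v _ => hdeg v)
      _ = ∑ v ∈ (univ : Finset (Fin (ℓ^3))).filter (fun v => v.val % bb ℓ < ℓ), (ℓ - 1) :=
          (Finset.sum_filter _ _).symm
      _ = ((univ : Finset (Fin (ℓ^3))).filter (fun v => v.val % bb ℓ < ℓ)).card * (ℓ - 1) := by
          rw [Finset.sum_const, smul_eq_mul]
      _ = ℓ^2 * (ℓ - 1) := by rw [clique_filter_card ℓ hℓ]
  omega
end Stmt14Aux

/-- for every `ℓ ≥ 2` there is a connected graph on `n = ℓ³` vertices
whose densest `ℓ²`-subgraph is at least `ℓ/3 = n^{1/3}/3` times denser than every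
connected `ℓ²`-subgraph. -/
theorem stmt14 (ℓ : ℕ) (hℓ : 2 ≤ ℓ) :
    ∃ G : SimpleGraph (Fin (ℓ ^ 3)), G.Connected ∧
      maxKDensity G (ℓ ^ 2) ≥ ((ℓ : ℝ) / 3) * maxConnKDensity G (ℓ ^ 2) := by
  refine ⟨Gr ℓ, Gr_connected ℓ hℓ, ?_⟩
  have hℓR : (2 : ℝ) ≤ (ℓ : ℝ) := by exact_mod_cast hℓ
  have hℓpos : (0 : ℝ) < (ℓ : ℝ) := by linarith
  -- upper bound on connected densities
  have hub : maxConnKDensity (Gr ℓ) (ℓ^2) ≤ 3 * ((ℓ : ℝ) - 1) / ℓ := by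
    unfold maxConnKDensity
    apply Real.sSup_le
    · rintro x ⟨H, hcard, hconn, rfl⟩
      have hE := edge_bound ℓ hℓ H hconn hcard
      have h2 : 3 * ℓ ≤ 3 * (ℓ * ℓ) := by
        have : ℓ ≤ ℓ * ℓ := Nat.le_mul_of_pos_left ℓ (by omega)
        omega
      have hE' : 2 * H.edgeSet.ncard + 3 * ℓ ≤ 3 * (ℓ * ℓ) := by omega
      have hER : 2 * (H.edgeSet.ncard : ℝ) + 3 * (ℓ : ℝ) ≤ 3 * ((ℓ : ℝ) * ℓ) := by
        exact_mod_cast hE'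
      unfold subDensity
      rw [hcard]
      rw [div_le_div_iff₀ (by positivity) hℓpos]
      push_cast
      nlinarith [mul_le_mul_of_nonneg_right hER hℓpos.le]
    · apply div_nonneg (by linarith) (by linarith)
  -- lower bound via Hstar
  have hdens : subDensity (Hstar ℓ) = (ℓ : ℝ) - 1 := by
    unfold subDensity
    rw [Hstar_verts ℓ hℓ]
    have h2E : ((2 * (Hstar ℓ).edgeSet.ncard : ℕ) : ℝ) = (ℓ : ℝ)^2 * ((ℓ : ℝ) - 1) := by
      rw [Hstar_edges ℓ hℓ]
      push_cast [Nat.cast_sub (show 1 ≤ ℓ by omega)]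
      ring
    have h2E' : 2 * ((Hstar ℓ).edgeSet.ncard : ℝ) = (ℓ : ℝ)^2 * ((ℓ : ℝ) - 1) := by
      rw [← h2E]; push_cast; ring
    rw [h2E']
    have hne : ((ℓ : ℝ)^2) ≠ 0 := by positivity
    push_cast
    field_simp
  have hbdd : BddAbove {x : ℝ | ∃ H : (Gr ℓ).Subgraph, H.verts.ncard = ℓ^2 ∧ x = subDensity H} := by
    refine ⟨2 * (Fintype.card (Sym2 (Fin (ℓ^3))) : ℝ), ?_⟩
    rintro x ⟨H, hcard, rfl⟩
    have h1 : H.edgeSet.ncard ≤ Fintype.card (Sym2 (Fin (ℓ^3))) := by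
      refine le_trans (Set.ncard_le_ncard (Set.subset_univ _) Set.finite_univ) ?_
      rw [Set.ncard_univ]
      exact (Nat.card_eq_fintype_card (α := Sym2 (Fin (ℓ^3)))).le
    have h1R : (H.edgeSet.ncard : ℝ) ≤ (Fintype.card (Sym2 (Fin (ℓ^3))) : ℝ) := by
      exact_mod_cast h1
    unfold subDensity
    rw [hcard]
    calc 2 * (H.edgeSet.ncard : ℝ) / ((ℓ^2 : ℕ) : ℝ)
        ≤ 2 * (H.edgeSet.ncard : ℝ) := by
          apply div_le_self (by positivity)
          have h2 : (1 : ℕ) ≤ ℓ^2 := Nat.one_le_iff_ne_zero.mpr (by positivity)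
          exact_mod_cast h2
      _ ≤ 2 * (Fintype.card (Sym2 (Fin (ℓ^3))) : ℝ) := by linarith
  have hmem : ((ℓ : ℝ) - 1) ∈
      {x : ℝ | ∃ H : (Gr ℓ).Subgraph, H.verts.ncard = ℓ^2 ∧ x = subDensity H} :=
    ⟨Hstar ℓ, Hstar_verts ℓ hℓ, hdens.symm⟩
  have hlb : ((ℓ : ℝ) - 1) ≤ maxKDensity (Gr ℓ) (ℓ^2) := by
    unfold maxKDensity
    exact le_csSup hbdd hmem
  have h3 : (ℓ : ℝ) / 3 * maxConnKDensity (Gr ℓ) (ℓ^2)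
      ≤ (ℓ : ℝ) / 3 * (3 * ((ℓ : ℝ) - 1) / ℓ) :=
    mul_le_mul_of_nonneg_left hub (by positivity)
  have h4 : (ℓ : ℝ) / 3 * (3 * ((ℓ : ℝ) - 1) / ℓ) = (ℓ : ℝ) - 1 := by
    field_simp
  rw [ge_iff_le]
  linarith
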